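/- arXiv:2204.00574 — 2 statements merged into one kernel-verified Lean document; each statement's English description precedes it below -/
import Mathlib

section
/- Let k ≥ 1 and let F : ℕ^k → ℂ be such that the multiple series ∑ (μ*F)(n₁,…,n_k)/(n₁⋯n_k) converges absolutely, where μ*F denotes k-variable Möbius inversion. Then (1/(x(log x)^{k-1})) ∑_{n₁⋯n_k ≤ x} F(n₁,…,n_k) → C_{F,k}/(k-1)! as x → ∞, where C_{F,k} is the sum of the series. -/
open Finset Filter

noncomputable section

/-- The set of ordered `k`-tuples of positive integers with product `n`. -/
def tuplesProd (k n : ℕ) : Finset (Fin k → ℕ) :=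
  (Fintype.piFinset fun _ => n.divisors).filter fun v => ∏ i, v i = n

/-- The `k`-variable Möbius inversion `μ * F` (Dirichlet convolution in `k` variables
with the `k`-variable Möbius function `μ(n₁)⋯μ(n_k)`). -/
def mconv (k : ℕ) (F : (Fin k → ℕ) → ℂ) (n : Fin k → ℕ) : ℂ :=
  ∑ d ∈ Fintype.piFinset (fun i => (n i).divisors),
    (∏ i, ((ArithmeticFunction.moebius ((n i) / (d i)) : ℤ) : ℂ)) * F d

section
open Real


def Ak (k N : ℕ) : Finset (Fin k → ℕ) :=
  (Fintype.piFinset fun _ => Finset.Icc 1 N).filter fun v => ∏ i, v i ≤ N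

def Tc (k N : ℕ) : ℕ := (Ak k N).card

def dd (k : ℕ) (x : ℝ) : ℝ := (Tc k ⌊x⌋₊ : ℝ)

lemma mem_Ak {k N : ℕ} {v : Fin k → ℕ} : v ∈ Ak k N ↔ (∀ i, 1 ≤ v i) ∧ ∏ i, v i ≤ N := by
  simp only [Ak, mem_filter, Fintype.mem_piFinset, mem_Icc]
  constructor
  · rintro ⟨h1, h2⟩
    exact ⟨fun i => (h1 i).1, h2⟩
  · rintro ⟨h1, h2⟩
    refine ⟨fun i => ⟨h1 i, ?_⟩, h2⟩
    exact le_trans (Finset.single_le_prod' (fun j _ => h1 j) (mem_univ i)) h2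

lemma Tc_zero (N : ℕ) : Tc 0 N = if 1 ≤ N then 1 else 0 := by
  unfold Tc Ak
  by_cases h : 1 ≤ N
  · rw [if_pos h, Finset.filter_true_of_mem (fun v _ => by simpa using h),
      Fintype.card_piFinset]
    simp
  · rw [if_neg h, Finset.card_eq_zero, Finset.filter_eq_empty_iff]
    intro v _
    simp only [Fin.prod_univ_zero]
    omega

lemma Tc_zero_right (k : ℕ) : Tc k 0 = 0 := by
  unfold Tc Ak
  rw [Finset.card_eq_zero, Finset.filter_eq_empty_iff]
  intro v hv
  simp only [Fintype.mem_piFinset, mem_Icc] at hv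
  have : 1 ≤ ∏ i, v i := Finset.one_le_prod' (fun i _ => (hv i).1)
  omega

lemma Tc_succ (k N : ℕ) : Tc (k + 1) N = ∑ n ∈ Finset.Icc 1 N, Tc k (N / n) := by
  unfold Tc
  rw [Finset.card_eq_sum_card_fiberwise (f := fun v => v 0) (t := Finset.Icc 1 N)]
  · refine Finset.sum_congr rfl fun n hn => ?_
    simp only [mem_Icc] at hn
    have hn0 : 0 < n := hn.1
    apply Finset.card_nbij' (fun v => Fin.tail v) (fun m => Fin.cons n m)
    · intro v hv
      simp only [mem_coe, mem_filter] at hv ⊢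
      obtain ⟨hv, h0⟩ := hv
      rw [mem_Ak] at hv ⊢
      obtain ⟨h1, h2⟩ := hv
      rw [Fin.prod_univ_succ, h0] at h2
      have hle : ∏ i, Fin.tail v i ≤ N / n := (Nat.le_div_iff_mul_le hn0).2 (by
        rw [mul_comm]; exact h2)
      exact ⟨fun i => h1 _, hle⟩
    · intro m hm
      rw [mem_coe, mem_Ak] at hm
      obtain ⟨h1, h2⟩ := hm
      have hprod : n * ∏ i, m i ≤ N := by
        rw [mul_comm]
        exact (Nat.le_div_iff_mul_le hn0).1 h2
      have hmem : Fin.cons n m ∈ Ak (k + 1) N := by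
        rw [mem_Ak]
        constructor
        · intro i
          induction i using Fin.cases with
          | zero => simpa using hn.1
          | succ j => simpa using h1 j
        · rw [Fin.prod_univ_succ, Fin.cons_zero]
          simpa using hprod
      simp only [mem_coe, mem_filter, Fin.cons_zero, and_true]
      exact hmem
    · intro v hv
      simp only [mem_coe, mem_filter] at hv
      rw [← hv.2]
      exact Fin.cons_self_tail v
    · intro m _
      exact Fin.tail_cons _ _
  · intro v hv
    rw [mem_coe, mem_Ak] at hv
    simp only [mem_coe, mem_Icc]
    exact ⟨hv.1 0, le_trans (Finset.single_le_prod' (fun j _ => hv.1 j) (mem_univ 0)) hv.2⟩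


lemma mconv_eq_zero {k : ℕ} (F : (Fin k → ℕ) → ℂ) {n : Fin k → ℕ} {i : Fin k}
    (h : n i = 0) : mconv k F n = 0 := by
  unfold mconv
  rw [Finset.sum_eq_zero]
  intro d hd
  simp only [Fintype.mem_piFinset] at hd
  have := hd i
  rw [h] at this
  simp at this

lemma sum_moebius_divisors (m : ℕ) :
    ∑ d ∈ m.divisors, ((ArithmeticFunction.moebius d : ℤ) : ℂ) =
      if m = 1 then 1 else 0 := by
  have h := congrArg (fun f => f m) ArithmeticFunction.moebius_mul_coe_zeta
  simp only [ArithmeticFunction.coe_mul_zeta_apply, ArithmeticFunction.one_apply] at h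
  rw [← Int.cast_sum, h]
  split <;> simp

lemma div_dvd_div_of_dvd {e d n : ℕ} (hed : e ∣ d) (hdn : d ∣ n) (hd : d ≠ 0) :
    d / e ∣ n / e := by
  obtain ⟨c, rfl⟩ := hed
  obtain ⟨s, rfl⟩ := hdn
  have he : e ≠ 0 := by rintro rfl; simp at hd
  rw [Nat.mul_div_cancel_left _ (Nat.pos_of_ne_zero he), mul_assoc,
    Nat.mul_div_cancel_left _ (Nat.pos_of_ne_zero he)]
  exact dvd_mul_right c s

lemma moebius_inv (k : ℕ) (F : (Fin k → ℕ) → ℂ) (n : Fin k → ℕ) (hn : ∀ i, n i ≠ 0) :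
    ∑ d ∈ Fintype.piFinset (fun i => (n i).divisors), mconv k F d = F n := by
  unfold mconv
  rw [Finset.sum_sigma']
  rw [Finset.sum_nbij' (i := fun p => (⟨p.2, fun i => p.1 i / p.2 i⟩ :
        (_ : Fin k → ℕ) × (Fin k → ℕ)))
      (j := fun p => ⟨fun i => p.1 i * p.2 i, p.1⟩)
      (t := (Fintype.piFinset (fun i => (n i).divisors)).sigma
        (fun e => Fintype.piFinset (fun i => ((n i) / (e i)).divisors)))
      (g := fun p => (∏ i, ((ArithmeticFunction.moebius (p.2 i) : ℤ) : ℂ)) * F p.1)]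
  · rw [Finset.sum_sigma]
    have key : ∀ e ∈ Fintype.piFinset (fun i => (n i).divisors),
        ∑ c ∈ Fintype.piFinset (fun i => ((n i) / (e i)).divisors),
          (∏ i, ((ArithmeticFunction.moebius (c i) : ℤ) : ℂ)) * F e
        = if e = n then F n else 0 := by
      intro e he
      simp only [Fintype.mem_piFinset, Nat.mem_divisors] at he
      rw [← Finset.sum_mul, ← Finset.prod_univ_sum (t := fun i => (n i / e i).divisors)
        (f := fun _ c => ((ArithmeticFunction.moebius c : ℤ) : ℂ))]
      have : ∀ i : Fin k, ∑ c ∈ ((n i) / (e i)).divisors,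
          ((ArithmeticFunction.moebius c : ℤ) : ℂ) = if n i / e i = 1 then 1 else 0 :=
        fun i => sum_moebius_divisors _
      rw [Finset.prod_congr rfl (fun i _ => this i), Finset.prod_boole]
      by_cases h : e = n
      · subst h
        rw [if_pos, one_mul, if_pos rfl]
        intro i _
        rw [Nat.div_self (Nat.pos_of_ne_zero (hn i))]
      · rw [if_neg, zero_mul, if_neg h]
        intro hall
        apply h
        funext i
        have hd := (he i).1
        have h1 := hall i (mem_univ i)
        obtain ⟨c, hc⟩ := hd
        have he0 : e i ≠ 0 := by
          intro h0; rw [h0, zero_mul] at hc; exact hn i hc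
        rw [hc, Nat.mul_div_cancel_left _ (Nat.pos_of_ne_zero he0)] at h1
        rw [hc, h1, mul_one]
    rw [Finset.sum_congr rfl key, Finset.sum_ite_eq' _ n]
    rw [if_pos]
    simp only [Fintype.mem_piFinset, Nat.mem_divisors]
    exact fun i => ⟨dvd_rfl, hn i⟩
  · rintro ⟨d, e⟩ hde
    simp only [Finset.mem_sigma, Fintype.mem_piFinset, Nat.mem_divisors] at hde ⊢
    obtain ⟨hd, he⟩ := hde
    constructor
    · exact fun i => ⟨dvd_trans (he i).1 (hd i).1, hn i⟩
    · intro i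
      have hei : e i ≠ 0 := by
        intro h0
        exact (he i).2 (Nat.eq_zero_of_zero_dvd (h0 ▸ (he i).1))
      refine ⟨div_dvd_div_of_dvd (he i).1 (hd i).1 (he i).2, ?_⟩
      have : 0 < n i / e i := Nat.div_pos (Nat.le_of_dvd (Nat.pos_of_ne_zero (hn i))
        ((he i).1.trans (hd i).1)) (Nat.pos_of_ne_zero hei)
      omega
  · rintro ⟨e, c⟩ hec
    simp only [Finset.mem_sigma, Fintype.mem_piFinset, Nat.mem_divisors] at hec ⊢
    obtain ⟨he, hc⟩ := hec
    constructor
    · intro i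
      refine ⟨?_, hn i⟩
      have : e i * (n i / e i) = n i := Nat.mul_div_cancel' (he i).1
      calc e i * c i ∣ e i * (n i / e i) := mul_dvd_mul_left _ (hc i).1
        _ = n i := this
    · intro i
      have h1 : e i ≠ 0 := by
        intro h0
        exact hn i (by simpa [h0] using Nat.eq_zero_of_zero_dvd (h0 ▸ (he i).1))
      have h2 : c i ≠ 0 := by
        intro h0
        have hne : n i / e i ≠ 0 := by
          have : 0 < n i / e i := Nat.div_pos (Nat.le_of_dvd (Nat.pos_of_ne_zero (hn i))
            (he i).1) (Nat.pos_of_ne_zero h1)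
          omega
        exact hne (Nat.eq_zero_of_zero_dvd (h0 ▸ (hc i).1))
      exact ⟨Dvd.intro _ rfl, mul_ne_zero h1 h2⟩
  · rintro ⟨d, e⟩ hde
    simp only [Finset.mem_sigma, Fintype.mem_piFinset, Nat.mem_divisors] at hde
    obtain ⟨hd, he⟩ := hde
    have h : (fun i => e i * (d i / e i)) = d := funext fun i => Nat.mul_div_cancel' (he i).1
    exact congrArg (fun f => (⟨f, e⟩ : (_ : Fin k → ℕ) × (Fin k → ℕ))) h
  · rintro ⟨e, c⟩ hec
    simp only [Finset.mem_sigma, Fintype.mem_piFinset, Nat.mem_divisors] at hec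
    obtain ⟨he, hc⟩ := hec
    have h1 : ∀ i, e i ≠ 0 := by
      intro i h0
      exact hn i (by simpa [h0] using Nat.eq_zero_of_zero_dvd (h0 ▸ (he i).1))
    have h : (fun i => e i * c i / e i) = c :=
      funext fun i => Nat.mul_div_cancel_left _ (Nat.pos_of_ne_zero (h1 i))
    exact congrArg (fun f => (⟨e, f⟩ : (_ : Fin k → ℕ) × (Fin k → ℕ))) h
  · rintro ⟨d, e⟩ _
    rfl

section
variable {k : ℕ} (F : (Fin k → ℕ) → ℂ)

lemma sum_S (N : ℕ) :
    ∑ n ∈ Finset.Icc 1 N, ∑ v ∈ tuplesProd k n, F v = ∑ v ∈ Ak k N, F v := by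
  have hfib : ∀ n ∈ Finset.Icc 1 N,
      tuplesProd k n = (Ak k N).filter (fun v => ∏ i, v i = n) := by
    intro n hn
    simp only [mem_Icc] at hn
    ext v
    simp only [tuplesProd, mem_filter, Fintype.mem_piFinset, Nat.mem_divisors, mem_Ak]
    constructor
    · rintro ⟨h1, h2⟩
      have hpos : ∀ i, 1 ≤ v i := fun i => Nat.pos_of_dvd_of_pos (h1 i).1 (by omega)
      exact ⟨⟨hpos, le_of_eq h2 |>.trans hn.2⟩, h2⟩
    · rintro ⟨⟨_, _⟩, h3⟩
      exact ⟨fun i => ⟨h3 ▸ Finset.dvd_prod_of_mem v (Finset.mem_univ i), by omega⟩, h3⟩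
  rw [show ∑ n ∈ Finset.Icc 1 N, ∑ v ∈ tuplesProd k n, F v
      = ∑ n ∈ Finset.Icc 1 N, ∑ v ∈ (Ak k N).filter (fun v => ∏ i, v i = n), F v from
    Finset.sum_congr rfl fun n hn => by rw [hfib n hn]]
  exact Finset.sum_fiberwise_of_maps_to (fun v hv => by
    rw [mem_Ak] at hv
    simp only [mem_Icc]
    exact ⟨Finset.one_le_prod' (fun i _ => hv.1 i), hv.2⟩) F

lemma hyperbola (N : ℕ) :
    ∑ v ∈ Ak k N, F v = ∑ d ∈ Ak k N, mconv k F d * (Tc k (N / ∏ i, d i) : ℂ) := by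
  have h1 : ∀ v ∈ Ak k N, F v = ∑ d ∈ Fintype.piFinset (fun i => (v i).divisors),
      mconv k F d := by
    intro v hv
    rw [mem_Ak] at hv
    exact (moebius_inv k F v (fun i => by have := hv.1 i; omega)).symm
  rw [Finset.sum_congr rfl h1, Finset.sum_sigma']
  have h2 : ∀ d ∈ Ak k N, mconv k F d * (Tc k (N / ∏ i, d i) : ℂ) =
      ∑ m ∈ Ak k (N / ∏ i, d i), mconv k F d := by
    intro d _
    rw [Finset.sum_const, Tc, nsmul_eq_mul, mul_comm]
  rw [Finset.sum_congr rfl h2, Finset.sum_sigma']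
  apply Finset.sum_nbij' (i := fun p => (⟨p.2, fun i => p.1 i / p.2 i⟩ :
      (_ : Fin k → ℕ) × (Fin k → ℕ))) (j := fun p => ⟨fun i => p.1 i * p.2 i, p.1⟩)
  · rintro ⟨v, d⟩ hvd
    simp only [Finset.mem_sigma, Fintype.mem_piFinset, Nat.mem_divisors, mem_Ak] at hvd ⊢
    obtain ⟨⟨h1, h2⟩, hd⟩ := hvd
    have hd1 : ∀ i, 1 ≤ d i := fun i => Nat.pos_of_ne_zero (fun h0 => by
      have := Nat.eq_zero_of_zero_dvd (h0 ▸ (hd i).1); have := h1 i; omega)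
    have hdle : ∀ i, d i ≤ v i := fun i => Nat.le_of_dvd (h1 i) (hd i).1
    have hprodd : ∏ i, d i ≤ N := le_trans (Finset.prod_le_prod' fun i _ => hdle i) h2
    have hpd : 0 < ∏ i, d i := Finset.prod_pos fun i _ => hd1 i
    have hmul : (∏ i, v i / d i) * ∏ i, d i = ∏ i, v i := by
      rw [← Finset.prod_mul_distrib]
      exact Finset.prod_congr rfl fun i _ => Nat.div_mul_cancel (hd i).1
    refine ⟨⟨hd1, hprodd⟩, fun i => Nat.one_le_div_iff (hd1 i) |>.2 (hdle i), ?_⟩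
    rw [Nat.le_div_iff_mul_le hpd, hmul]
    exact h2
  · rintro ⟨d, m⟩ hdm
    simp only [Finset.mem_sigma, mem_Ak] at hdm
    obtain ⟨⟨hd1, hd2⟩, hm1, hm2⟩ := hdm
    have hpd : 0 < ∏ i, d i := Finset.prod_pos fun i _ => hd1 i
    have hprod : (∏ i, d i) * ∏ i, m i ≤ N := by
      rw [mul_comm]
      exact (Nat.le_div_iff_mul_le hpd).1 hm2
    simp only [Finset.mem_sigma, Fintype.mem_piFinset, Nat.mem_divisors, mem_Ak]
    have hvle : ∏ i, d i * m i ≤ N := by rw [Finset.prod_mul_distrib]; exact hprod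
    refine ⟨⟨fun i => Nat.one_le_iff_ne_zero.2 (mul_ne_zero
      (by have := hd1 i; omega) (by have := hm1 i; omega)), hvle⟩,
      fun i => ⟨Dvd.intro _ rfl, mul_ne_zero (by have := hd1 i; omega) (by have := hm1 i; omega)⟩⟩
  · rintro ⟨v, d⟩ hvd
    simp only [Finset.mem_sigma, Fintype.mem_piFinset, Nat.mem_divisors, mem_Ak] at hvd
    obtain ⟨_, hd⟩ := hvd
    have h : (fun i => d i * (v i / d i)) = v := funext fun i => Nat.mul_div_cancel' (hd i).1
    exact congrArg (fun f => (⟨f, d⟩ : (_ : Fin k → ℕ) × (Fin k → ℕ))) h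
  · rintro ⟨d, m⟩ hdm
    simp only [Finset.mem_sigma, mem_Ak] at hdm
    obtain ⟨⟨hd1, _⟩, _⟩ := hdm
    have h : (fun i => d i * m i / d i) = m :=
      funext fun i => Nat.mul_div_cancel_left _ (hd1 i)
    exact congrArg (fun f => (⟨d, f⟩ : (_ : Fin k → ℕ) × (Fin k → ℕ))) h
  · rintro ⟨v, d⟩ _
    rfl

section
open intervalIntegral

lemma sum_Ico_succ_shift (g : ℕ → ℝ) (a b : ℕ) :
    ∑ i ∈ Finset.Ico a b, g (i + 1) = ∑ n ∈ Finset.Ioc a b, g n := by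
  rw [← Finset.Ico_add_one_add_one_eq_Ioc]
  apply Finset.sum_nbij' (i := fun n => n + 1) (j := fun n => n - 1) <;>
    simp +contextual [Finset.mem_Ico] <;> omega

variable {x : ℝ}

lemma flog_antitone (p : ℕ) (hx : 1 ≤ x) :
    AntitoneOn (fun t : ℝ => (Real.log x - Real.log t) ^ p / t) (Set.Icc 1 x) := by
  intro a ha b hb hab
  simp only [Set.mem_Icc] at ha hb
  have ha0 : 0 < a := lt_of_lt_of_le one_pos ha.1
  have hb0 : 0 < b := lt_of_lt_of_le one_pos hb.1
  have h1 : 0 ≤ Real.log x - Real.log b := sub_nonneg.2 (Real.log_le_log hb0 hb.2)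
  have h2 : Real.log x - Real.log b ≤ Real.log x - Real.log a :=
    sub_le_sub_left (Real.log_le_log ha0 hab) _
  exact div_le_div₀ (pow_nonneg (h1.trans h2) p) (pow_le_pow_left₀ h1 h2 p) ha0 hab

lemma flog_integrable (p : ℕ) (x : ℝ) {a b : ℝ} (ha : 0 < a) (hab : a ≤ b) :
    IntervalIntegrable (fun t : ℝ => (Real.log x - Real.log t) ^ p / t)
      MeasureTheory.volume a b := by
  apply ContinuousOn.intervalIntegrable
  have hsub : Set.uIcc a b ⊆ {(0:ℝ)}ᶜ := by
    rw [Set.uIcc_of_le hab]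
    intro t ht
    simp only [Set.mem_Icc] at ht
    simp only [Set.mem_compl_iff, Set.mem_singleton_iff]
    nlinarith [ht.1]
  exact ((continuousOn_const.sub (Real.continuousOn_log.mono hsub)).pow p).div
    continuousOn_id (fun t ht => by have := hsub ht; simpa using this)

lemma flog_integral (p : ℕ) (hx : 0 < x) {a b : ℝ} (ha : 0 < a) (hab : a ≤ b) :
    ∫ t in a..b, (Real.log x - Real.log t) ^ p / t
      = ((Real.log x - Real.log a) ^ (p + 1) - (Real.log x - Real.log b) ^ (p + 1)) / (p + 1) := by
  have hderiv : ∀ t ∈ Set.uIcc a b,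
      HasDerivAt (fun t => -((Real.log x - Real.log t) ^ (p + 1)) / (p + 1))
        ((Real.log x - Real.log t) ^ p / t) t := by
    intro t ht
    rw [Set.uIcc_of_le hab] at ht
    have ht0 : 0 < t := lt_of_lt_of_le ha ht.1
    have h1 : HasDerivAt (fun t : ℝ => Real.log x - Real.log t) (-t⁻¹) t :=
      (Real.hasDerivAt_log ht0.ne').const_sub _
    have h2 := (h1.pow (p + 1)).neg.div_const ((p : ℝ) + 1)
    refine h2.congr_deriv ?_
    have : (p : ℝ) + 1 ≠ 0 := by positivity
    push_cast
    field_simp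
  rw [intervalIntegral.integral_eq_sub_of_hasDerivAt hderiv (flog_integrable p x ha hab)]
  ring

lemma sum_log_pow_div (p : ℕ) (hx : 1 ≤ x) :
    |(∑ n ∈ Finset.Icc 1 ⌊x⌋₊, (Real.log x - Real.log n) ^ p / n) -
      (Real.log x) ^ (p + 1) / (p + 1)| ≤ 2 * (1 + Real.log x) ^ p := by
  set M := ⌊x⌋₊ with hM
  have hx0 : (0:ℝ) < x := by linarith
  have hM1 : 1 ≤ M := Nat.le_floor (by exact_mod_cast hx)
  have hMx : (M : ℝ) ≤ x := Nat.floor_le (by linarith)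
  have hM1R : (1:ℝ) ≤ (M:ℝ) := by exact_mod_cast hM1
  have hxM : x < M + 1 := Nat.lt_floor_add_one x
  have hlog0 : 0 ≤ Real.log x := Real.log_nonneg hx
  set f : ℝ → ℝ := fun t => (Real.log x - Real.log t) ^ p / t with hf
  have hanti : AntitoneOn f (Set.Icc 1 x) := flog_antitone p hx
  have hI1x : ∫ t in (1:ℝ)..x, f t = (Real.log x) ^ (p + 1) / (p + 1) := by
    rw [hf, flog_integral p hx0 one_pos hx]
    rw [Real.log_one, sub_zero, sub_self, zero_pow (Nat.succ_ne_zero p)]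
    ring
  have hsplit : (∫ t in (1:ℝ)..(M:ℝ), f t) + ∫ t in (M:ℝ)..x, f t = ∫ t in (1:ℝ)..x, f t :=
    intervalIntegral.integral_add_adjacent_intervals
      (flog_integrable p x one_pos hM1R) (flog_integrable p x (by linarith) hMx)
  have hfM_nonneg : 0 ≤ f M := by
    rw [hf]
    have : 0 ≤ Real.log x - Real.log M := sub_nonneg.2 (Real.log_le_log (by linarith) hMx)
    positivity
  have hfM_le : f M ≤ (Real.log x) ^ p := by
    rw [hf]
    have h1 : 0 ≤ Real.log x - Real.log M := sub_nonneg.2 (Real.log_le_log (by linarith) hMx)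
    have h2 : Real.log x - Real.log M ≤ Real.log x := by
      have := Real.log_nonneg hM1R
      linarith
    calc (Real.log x - Real.log M) ^ p / (M:ℝ) ≤ (Real.log x - Real.log M) ^ p / 1 := by
          exact div_le_div_of_nonneg_left (pow_nonneg h1 p) one_pos hM1R
        _ = (Real.log x - Real.log M) ^ p := div_one _
        _ ≤ (Real.log x) ^ p := pow_le_pow_left₀ h1 h2 p
  have hIMx_nonneg : 0 ≤ ∫ t in (M:ℝ)..x, f t := by
    apply intervalIntegral.integral_nonneg hMx
    intro u hu
    simp only [Set.mem_Icc] at hu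
    rw [hf]
    have hu0 : 0 < u := lt_of_lt_of_le (by linarith) hu.1
    have : 0 ≤ Real.log x - Real.log u := sub_nonneg.2 (Real.log_le_log hu0 hu.2)
    positivity
  have hIMx_le : (∫ t in (M:ℝ)..x, f t) ≤ (Real.log x) ^ p := by
    have hconst : (∫ t in (M:ℝ)..x, f M) = (x - M) * f M := by
      rw [intervalIntegral.integral_const, smul_eq_mul]
    have hmono : (∫ t in (M:ℝ)..x, f t) ≤ ∫ t in (M:ℝ)..x, f M := by
      apply intervalIntegral.integral_mono_on hMx (flog_integrable p x (by linarith) hMx)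
        intervalIntegrable_const
      intro u hu
      simp only [Set.mem_Icc] at hu
      exact hanti ⟨hM1R, hMx⟩ ⟨hM1R.trans hu.1, hu.2⟩ hu.1
    calc (∫ t in (M:ℝ)..x, f t) ≤ (x - M) * f M := by rw [← hconst]; exact hmono
      _ ≤ 1 * f M := by
          apply mul_le_mul_of_nonneg_right _ hfM_nonneg
          linarith
      _ ≤ (Real.log x) ^ p := by rw [one_mul]; exact hfM_le
  -- upper bound
  have hupper : (∑ n ∈ Finset.Icc 1 M, f n) ≤ (Real.log x) ^ p + ∫ t in (1:ℝ)..x, f t := by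
    have hdecomp : ∑ n ∈ Finset.Icc 1 M, f n = f 1 + ∑ n ∈ Finset.Ioc 1 M, f n := by
      rw [← Finset.Ioc_insert_left hM1, Finset.sum_insert (by simp)]
      norm_num
    have hint_le : (∑ n ∈ Finset.Ioc 1 M, f n) ≤ ∫ t in (1:ℝ)..(M:ℝ), f t := by
      have := AntitoneOn.sum_le_integral_Ico hM1 (f := f)
        (by
          rw [Nat.cast_one]
          exact hanti.mono (Set.Icc_subset_Icc le_rfl hMx))
      rw [Nat.cast_one] at this
      calc (∑ n ∈ Finset.Ioc 1 M, f n) = ∑ i ∈ Finset.Ico 1 M, f (↑(i + 1)) := by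
            rw [sum_Ico_succ_shift (fun n => f n) 1 M]
        _ ≤ ∫ t in (1:ℝ)..(M:ℝ), f t := this
    have hf1 : f 1 = (Real.log x) ^ p := by
      rw [hf]
      simp [Real.log_one]
    have hI1M_le : (∫ t in (1:ℝ)..(M:ℝ), f t) ≤ ∫ t in (1:ℝ)..x, f t := by
      rw [← hsplit]
      linarith
    rw [hdecomp, hf1]
    push_cast
    linarith
  -- lower bound
  have hlower : (∫ t in (1:ℝ)..x, f t) - (Real.log x) ^ p ≤ ∑ n ∈ Finset.Icc 1 M, f n := by
    have hint_ge : (∫ t in (1:ℝ)..(M:ℝ), f t) ≤ ∑ n ∈ Finset.Ico 1 M, f n := by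
      have := AntitoneOn.integral_le_sum_Ico hM1 (f := f)
        (by
          rw [Nat.cast_one]
          exact hanti.mono (Set.Icc_subset_Icc le_rfl hMx))
      rw [Nat.cast_one] at this
      exact this
    have hIcoIcc : (∑ n ∈ Finset.Ico 1 M, f n) ≤ ∑ n ∈ Finset.Icc 1 M, f n := by
      rw [← Finset.Ico_insert_right hM1, Finset.sum_insert (by simp)]
      linarith [hfM_nonneg]
    have : (∫ t in (1:ℝ)..x, f t) - (Real.log x) ^ p ≤ ∫ t in (1:ℝ)..(M:ℝ), f t := by
      rw [← hsplit]
      linarith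
    linarith
  have hpow : (Real.log x) ^ p ≤ (1 + Real.log x) ^ p :=
    pow_le_pow_left₀ hlog0 (by linarith) p
  rw [abs_le]
  constructor <;> [skip; skip] <;>
    (first
      | (rw [← hI1x]; push_cast at hupper hlower ⊢; nlinarith [hpow])
      | skip)

section

lemma dd_nonneg (k : ℕ) (x : ℝ) : 0 ≤ dd k x := Nat.cast_nonneg _

lemma dd_of_lt_one {k : ℕ} {x : ℝ} (h : x < 1) : dd k x = 0 := by
  unfold dd
  have : ⌊x⌋₊ = 0 := Nat.floor_eq_zero.2 h
  rw [this, Tc_zero_right]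
  norm_num

lemma dd_succ (k : ℕ) (x : ℝ) : dd (k + 1) x = ∑ n ∈ Finset.Icc 1 ⌊x⌋₊, dd k (x / n) := by
  unfold dd
  rw [Tc_succ, Nat.cast_sum]
  refine Finset.sum_congr rfl fun n _ => ?_
  rw [Nat.floor_div_natCast]

lemma dd_one (x : ℝ) : dd 1 x = ⌊x⌋₊ := by
  unfold dd
  congr 1
  rw [Tc_succ]
  have : ∀ n ∈ Finset.Icc 1 ⌊x⌋₊, Tc 0 (⌊x⌋₊ / n) = 1 := by
    intro n hn
    simp only [Finset.mem_Icc] at hn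
    rw [Tc_zero, if_pos]
    exact Nat.one_le_div_iff (by omega) |>.2 hn.2
  rw [Finset.sum_congr rfl this, Finset.sum_const, Nat.card_Icc, smul_eq_mul, mul_one]
  omega

lemma floor_sub_abs {y : ℝ} (hy : 0 ≤ y) : |(⌊y⌋₊ : ℝ) - y| ≤ 1 := by
  have h1 : (⌊y⌋₊ : ℝ) ≤ y := Nat.floor_le hy
  have h2 : y < ⌊y⌋₊ + 1 := Nat.lt_floor_add_one y
  rw [abs_le]
  constructor <;> linarith

lemma harmonic_est {x : ℝ} (hx : 1 ≤ x) :
    |(∑ n ∈ Finset.Icc 1 ⌊x⌋₊, 1 / (n : ℝ)) - Real.log x| ≤ 2 := by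
  have := sum_log_pow_div 0 hx
  simpa using this

lemma dd_est (m : ℕ) : ∃ C : ℝ, 0 ≤ C ∧ ∀ x : ℝ, 1 ≤ x →
    |dd (m + 2) x - x * Real.log x ^ (m + 1) / (m + 1).factorial| ≤
      C * x * (1 + Real.log x) ^ ((m : ℝ) + 1 / 2) := by
  induction m with
  | zero =>
    refine ⟨3, by norm_num, fun x hx => ?_⟩
    have hx0 : (0:ℝ) < x := lt_of_lt_of_le one_pos hx
    have hlog0 : 0 ≤ Real.log x := Real.log_nonneg hx
    have hMx : (⌊x⌋₊ : ℝ) ≤ x := Nat.floor_le hx0.le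
    have h1 : dd 2 x = ∑ n ∈ Finset.Icc 1 ⌊x⌋₊, (⌊x / n⌋₊ : ℝ) := by
      rw [dd_succ 1 x]
      exact Finset.sum_congr rfl fun n _ => dd_one _
    have hsplit : dd 2 x - x * Real.log x =
        (∑ n ∈ Finset.Icc 1 ⌊x⌋₊, ((⌊x / n⌋₊ : ℝ) - x / n)) +
          x * ((∑ n ∈ Finset.Icc 1 ⌊x⌋₊, 1 / (n : ℝ)) - Real.log x) := by
      have hxs : x * (∑ n ∈ Finset.Icc 1 ⌊x⌋₊, 1 / (n : ℝ))
          = ∑ n ∈ Finset.Icc 1 ⌊x⌋₊, x / (n : ℝ) := by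
        rw [Finset.mul_sum]
        exact Finset.sum_congr rfl fun n _ => by ring
      rw [h1, Finset.sum_sub_distrib, mul_sub, hxs]
      ring
    have hb1 : |∑ n ∈ Finset.Icc 1 ⌊x⌋₊, ((⌊x / n⌋₊ : ℝ) - x / n)| ≤ x := by
      calc |∑ n ∈ Finset.Icc 1 ⌊x⌋₊, ((⌊x / n⌋₊ : ℝ) - x / n)|
          ≤ ∑ n ∈ Finset.Icc 1 ⌊x⌋₊, |(⌊x / n⌋₊ : ℝ) - x / n| :=
            Finset.abs_sum_le_sum_abs _ _
        _ ≤ ∑ n ∈ Finset.Icc 1 ⌊x⌋₊, 1 := by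
            refine Finset.sum_le_sum fun n hn => floor_sub_abs (by positivity)
        _ = (⌊x⌋₊ : ℝ) := by rw [Finset.sum_const, Nat.card_Icc]; simp
        _ ≤ x := hMx
    have hb2 : |x * ((∑ n ∈ Finset.Icc 1 ⌊x⌋₊, 1 / (n : ℝ)) - Real.log x)| ≤ 2 * x := by
      rw [abs_mul, abs_of_pos hx0]
      calc x * |(∑ n ∈ Finset.Icc 1 ⌊x⌋₊, 1 / (n : ℝ)) - Real.log x| ≤ x * 2 :=
        mul_le_mul_of_nonneg_left (harmonic_est hx) hx0.le
      _ = 2 * x := by ring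
    have hrp : (1:ℝ) ≤ (1 + Real.log x) ^ ((0:ℕ) + 1 / 2 : ℝ) :=
      Real.one_le_rpow (by linarith) (by norm_num)
    have : |dd 2 x - x * Real.log x| ≤ 3 * x := by
      rw [hsplit]
      calc |_ + _| ≤ _ + _ := abs_add_le _ _
        _ ≤ x + 2 * x := add_le_add hb1 hb2
        _ = 3 * x := by ring
    calc |dd 2 x - x * Real.log x ^ (0 + 1) / (0 + 1).factorial|
        = |dd 2 x - x * Real.log x| := by norm_num
      _ ≤ 3 * x := this
      _ = 3 * x * 1 := by ring
      _ ≤ 3 * x * (1 + Real.log x) ^ ((0:ℕ) + 1 / 2 : ℝ) := by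
          apply mul_le_mul_of_nonneg_left hrp (by positivity)
  | succ m ih =>
    obtain ⟨C, hC0, hC⟩ := ih
    refine ⟨2 * C + 2, by linarith, fun x hx => ?_⟩
    have hx0 : (0:ℝ) < x := lt_of_lt_of_le one_pos hx
    have hlog0 : 0 ≤ Real.log x := Real.log_nonneg hx
    have hMx : (⌊x⌋₊ : ℝ) ≤ x := Nat.floor_le hx0.le
    have hbase1 : (1:ℝ) ≤ 1 + Real.log x := by linarith
    have hbase0 : (0:ℝ) < 1 + Real.log x := by linarith
    have hdiv1 : ∀ n ∈ Finset.Icc 1 ⌊x⌋₊, 1 ≤ x / (n : ℝ) := by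
      intro n hn
      simp only [Finset.mem_Icc] at hn
      have hn1 : (1:ℝ) ≤ (n:ℝ) := by exact_mod_cast hn.1
      have hnx : (n:ℝ) ≤ x := le_trans (by exact_mod_cast Nat.cast_le.2 hn.2) hMx
      rw [le_div_iff₀ (by linarith)]
      linarith
    -- T1 : approximation of each term
    have hT1 : |∑ n ∈ Finset.Icc 1 ⌊x⌋₊,
          (dd (m + 2) (x / n) - (x / n) * Real.log (x / n) ^ (m + 1) / (m + 1).factorial)|
        ≤ 2 * C * x * (1 + Real.log x) ^ (((m:ℝ) + 1) + 1 / 2) := by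
      calc |∑ n ∈ Finset.Icc 1 ⌊x⌋₊,
            (dd (m + 2) (x / n) - (x / n) * Real.log (x / n) ^ (m + 1) / (m + 1).factorial)|
          ≤ ∑ n ∈ Finset.Icc 1 ⌊x⌋₊,
            |dd (m + 2) (x / n) - (x / n) * Real.log (x / n) ^ (m + 1) / (m + 1).factorial| :=
            Finset.abs_sum_le_sum_abs _ _
        _ ≤ ∑ n ∈ Finset.Icc 1 ⌊x⌋₊,
              C * (1 + Real.log x) ^ ((m : ℝ) + 1 / 2) * (x / n) := by
            refine Finset.sum_le_sum fun n hn => ?_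
            have hxn := hdiv1 n hn
            have hxn0 : (0:ℝ) < x / n := lt_of_lt_of_le one_pos hxn
            have hlogxn : Real.log (x / n) ≤ Real.log x := by
              apply Real.log_le_log hxn0
              apply div_le_self hx0.le
              simp only [Finset.mem_Icc] at hn
              exact_mod_cast hn.1
            calc |dd (m + 2) (x / n) - (x / n) * Real.log (x / n) ^ (m + 1) / (m + 1).factorial|
                ≤ C * (x / n) * (1 + Real.log (x / n)) ^ ((m : ℝ) + 1 / 2) := hC _ hxn
              _ ≤ C * (x / n) * (1 + Real.log x) ^ ((m : ℝ) + 1 / 2) := by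
                  apply mul_le_mul_of_nonneg_left _ (by positivity)
                  apply Real.rpow_le_rpow (by
                    have := Real.log_nonneg hxn
                    linarith) (by linarith) (by positivity)
              _ = C * (1 + Real.log x) ^ ((m : ℝ) + 1 / 2) * (x / n) := by ring
        _ = C * (1 + Real.log x) ^ ((m : ℝ) + 1 / 2) *
              (x * ∑ n ∈ Finset.Icc 1 ⌊x⌋₊, 1 / (n:ℝ)) := by
            rw [Finset.mul_sum, Finset.mul_sum]
            exact Finset.sum_congr rfl fun n _ => by ring
        _ ≤ C * (1 + Real.log x) ^ ((m : ℝ) + 1 / 2) * (x * (2 * (1 + Real.log x))) := by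
            apply mul_le_mul_of_nonneg_left _ (by positivity)
            apply mul_le_mul_of_nonneg_left _ hx0.le
            have := harmonic_est hx
            rw [abs_le] at this
            linarith
        _ = 2 * C * x * ((1 + Real.log x) ^ ((m : ℝ) + 1 / 2) * (1 + Real.log x) ^ (1:ℝ)) := by
            rw [Real.rpow_one]; ring
        _ = 2 * C * x * (1 + Real.log x) ^ (((m:ℝ) + 1) + 1 / 2) := by
            rw [← Real.rpow_add hbase0]
            ring_nf
    -- T2 : main term sum vs integral
    have hT2 : |(∑ n ∈ Finset.Icc 1 ⌊x⌋₊, (x / n) * Real.log (x / n) ^ (m + 1) / (m + 1).factorial)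
          - x * Real.log x ^ (m + 2) / (m + 2).factorial|
        ≤ 2 * x * (1 + Real.log x) ^ (((m:ℝ) + 1) + 1 / 2) := by
      have hfac : ((m + 2).factorial : ℝ) = ((m : ℝ) + 2) * ((m + 1).factorial : ℝ) := by
        rw [Nat.factorial_succ]
        push_cast
        ring
      have hrw : ∀ n ∈ Finset.Icc 1 ⌊x⌋₊,
          (x / n) * Real.log (x / n) ^ (m + 1) / (m + 1).factorial
            = (x / (m + 1).factorial) * ((Real.log x - Real.log n) ^ (m + 1) / n) := by
        intro n hn
        simp only [Finset.mem_Icc] at hn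
        have hn0 : (n:ℝ) ≠ 0 := Nat.cast_ne_zero.2 (by omega)
        rw [Real.log_div hx0.ne' hn0]
        have hfne : ((m + 1).factorial : ℝ) ≠ 0 := Nat.cast_ne_zero.2 (Nat.factorial_ne_zero _)
        field_simp
        all_goals first | ring1 | (left; ring1) | (left; trivial) | tauto
      rw [Finset.sum_congr rfl hrw, ← Finset.mul_sum]
      have key := sum_log_pow_div (m + 1) hx
      have hfac1 : (1:ℝ) ≤ ((m + 1).factorial : ℝ) := by
        exact_mod_cast Nat.one_le_iff_ne_zero.2 (Nat.factorial_ne_zero _)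
      have heq : x * Real.log x ^ (m + 2) / (m + 2).factorial
          = (x / (m + 1).factorial) * (Real.log x ^ (m + 1 + 1) / ((m:ℝ) + 1 + 1)) := by
        have h2 : ((m:ℝ) + 2) ≠ 0 := by positivity
        have h3 : ((m + 1).factorial : ℝ) ≠ 0 := Nat.cast_ne_zero.2 (Nat.factorial_ne_zero _)
        rw [hfac]
        field_simp
        all_goals first | ring1 | (left; ring1) | (left; trivial) | tauto
      rw [heq, ← mul_sub, abs_mul, abs_of_pos (by positivity)]
      have hcast : (((m + 1 : ℕ)):ℝ) + 1 = (m:ℝ) + 1 + 1 := by push_cast; ring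
      calc (x / (m + 1).factorial) *
            |(∑ n ∈ Finset.Icc 1 ⌊x⌋₊, (Real.log x - Real.log n) ^ (m + 1) / n)
              - Real.log x ^ (m + 1 + 1) / ((m:ℝ) + 1 + 1)|
          ≤ (x / (m + 1).factorial) * (2 * (1 + Real.log x) ^ (m + 1)) := by
            apply mul_le_mul_of_nonneg_left _ (by positivity)
            have := key
            rw [hcast] at this
            exact this
        _ ≤ x * (2 * (1 + Real.log x) ^ (m + 1)) := by
            apply mul_le_mul_of_nonneg_right _ (by positivity)
            rw [div_le_iff₀ (by positivity)]
            nlinarith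
        _ = 2 * x * (1 + Real.log x) ^ (m + 1) := by ring
        _ ≤ 2 * x * (1 + Real.log x) ^ (((m:ℝ) + 1) + 1 / 2) := by
            apply mul_le_mul_of_nonneg_left _ (by positivity)
            rw [show ((1:ℝ) + Real.log x) ^ (m + 1) = (1 + Real.log x) ^ (((m + 1 : ℕ)):ℝ) from
              (Real.rpow_natCast _ _).symm]
            apply Real.rpow_le_rpow_of_exponent_le hbase1
            push_cast
            linarith
    -- combine
    have hd : dd (m + 1 + 2) x = ∑ n ∈ Finset.Icc 1 ⌊x⌋₊, dd (m + 2) (x / n) :=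
      dd_succ (m + 2) x
    have hdecomp : dd (m + 1 + 2) x - x * Real.log x ^ (m + 1 + 1) / (m + 1 + 1).factorial
        = (∑ n ∈ Finset.Icc 1 ⌊x⌋₊,
            (dd (m + 2) (x / n) - (x / n) * Real.log (x / n) ^ (m + 1) / (m + 1).factorial))
          + ((∑ n ∈ Finset.Icc 1 ⌊x⌋₊,
              (x / n) * Real.log (x / n) ^ (m + 1) / (m + 1).factorial)
            - x * Real.log x ^ (m + 2) / (m + 2).factorial) := by
      rw [hd, Finset.sum_sub_distrib, show m + 1 + 1 = m + 2 from rfl]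
      ring
    rw [hdecomp]
    have hcast2 : (((m + 1 : ℕ)):ℝ) + 1 / 2 = ((m:ℝ) + 1) + 1 / 2 := by push_cast; ring
    rw [hcast2]
    calc |_ + _| ≤ _ + _ := abs_add_le _ _
      _ ≤ 2 * C * x * (1 + Real.log x) ^ (((m:ℝ) + 1) + 1 / 2)
          + 2 * x * (1 + Real.log x) ^ (((m:ℝ) + 1) + 1 / 2) := add_le_add hT1 hT2
      _ = (2 * C + 2) * x * (1 + Real.log x) ^ (((m:ℝ) + 1) + 1 / 2) := by ring

end

section
open Real

lemma dd_upper (k : ℕ) : ∃ B : ℝ, 0 ≤ B ∧ ∀ x : ℝ, 1 ≤ x →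
    dd (k + 1) x ≤ B * x * (1 + Real.log x) ^ k := by
  induction k with
  | zero =>
    refine ⟨1, zero_le_one, fun x hx => ?_⟩
    rw [dd_one, pow_zero]
    simpa using Nat.floor_le (by linarith : (0:ℝ) ≤ x)
  | succ k ih =>
    obtain ⟨B, hB0, hB⟩ := ih
    refine ⟨2 * B, by linarith, fun x hx => ?_⟩
    have hx0 : (0:ℝ) < x := by linarith
    have hlog0 : 0 ≤ Real.log x := Real.log_nonneg hx
    have hMx : (⌊x⌋₊ : ℝ) ≤ x := Nat.floor_le hx0.le
    rw [dd_succ]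
    calc ∑ n ∈ Finset.Icc 1 ⌊x⌋₊, dd (k + 1) (x / n)
        ≤ ∑ n ∈ Finset.Icc 1 ⌊x⌋₊, B * (1 + Real.log x) ^ k * (x * (1 / n)) := by
          refine Finset.sum_le_sum fun n hn => ?_
          simp only [Finset.mem_Icc] at hn
          have hn1 : (1:ℝ) ≤ (n:ℝ) := by exact_mod_cast hn.1
          have hnx : (n:ℝ) ≤ x := le_trans (by exact_mod_cast Nat.cast_le.2 hn.2) hMx
          by_cases hxn : 1 ≤ x / n
          · have h1 := hB _ hxn
            have hlogle : Real.log (x / n) ≤ Real.log x :=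
              Real.log_le_log (by positivity) (div_le_self hx0.le hn1)
            have hlogxn0 : 0 ≤ Real.log (x / n) := Real.log_nonneg hxn
            calc dd (k + 1) (x / n) ≤ B * (x / n) * (1 + Real.log (x / n)) ^ k := h1
              _ ≤ B * (x / n) * (1 + Real.log x) ^ k := by
                  apply mul_le_mul_of_nonneg_left _ (by positivity)
                  exact pow_le_pow_left₀ (by linarith) (by linarith) k
              _ = B * (1 + Real.log x) ^ k * (x * (1 / n)) := by ring
          · rw [dd_of_lt_one (by linarith)]
            positivity
      _ = B * (1 + Real.log x) ^ k * (x * ∑ n ∈ Finset.Icc 1 ⌊x⌋₊, (1 / (n:ℝ))) := by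
          rw [Finset.mul_sum, Finset.mul_sum]
          try exact Finset.sum_congr rfl fun n _ => by ring
      _ ≤ B * (1 + Real.log x) ^ k * (x * (2 * (1 + Real.log x))) := by
          apply mul_le_mul_of_nonneg_left _ (by positivity)
          apply mul_le_mul_of_nonneg_left _ hx0.le
          have := harmonic_est hx
          rw [abs_le] at this
          linarith
      _ = 2 * B * x * (1 + Real.log x) ^ (k + 1) := by ring

lemma log_ge_one {x : ℝ} (hx : 3 ≤ x) : 1 ≤ Real.log x := by
  have h1 : Real.exp 1 ≤ 3 := by
    have := Real.exp_one_lt_d9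
    linarith
  calc (1:ℝ) = Real.log (Real.exp 1) := (Real.log_exp 1).symm
    _ ≤ Real.log x := Real.log_le_log (Real.exp_pos 1) (by linarith)

lemma dd_tendsto (m : ℕ) :
    Filter.Tendsto (fun x => dd (m + 1) x / (x * Real.log x ^ m)) Filter.atTop
      (nhds (1 / (m.factorial : ℝ))) := by
  cases m with
  | zero =>
    simp only [pow_zero, mul_one, Nat.factorial_zero, Nat.cast_one, div_one]
    have h := tendsto_nat_floor_div_atTop (R := ℝ)
    exact h.congr fun x => by rw [dd_one]
  | succ m =>
    obtain ⟨C, hC0, hC⟩ := dd_est m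
    have hfac : (0:ℝ) < ((m+1).factorial : ℝ) := by
      exact_mod_cast Nat.factorial_pos _
    have hsq : Filter.Tendsto
        (fun x => dd (m + 2) x / (x * Real.log x ^ (m + 1)) - 1 / ((m+1).factorial : ℝ))
        Filter.atTop (nhds 0) := by
      apply squeeze_zero_norm' (a := fun x => C * 2 ^ ((m:ℝ) + 1/2) * Real.log x ^ (-(1:ℝ)/2))
      filter_upwards [Filter.eventually_ge_atTop (3:ℝ)] with x hx3
      have hx1 : (1:ℝ) ≤ x := by linarith
      have hx0 : (0:ℝ) < x := by linarith
      have hlog1 : 1 ≤ Real.log x := log_ge_one hx3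
      have hlog0 : (0:ℝ) < Real.log x := by linarith
      have hD : (0:ℝ) < x * Real.log x ^ (m + 1) := by positivity
      have heq : dd (m + 2) x / (x * Real.log x ^ (m + 1)) - 1 / ((m+1).factorial : ℝ)
          = (dd (m + 2) x - x * Real.log x ^ (m + 1) / (m + 1).factorial)
            / (x * Real.log x ^ (m + 1)) := by
        field_simp
        all_goals first | ring1 | (left; ring1) | (left; trivial) | tauto
      rw [Real.norm_eq_abs, heq, abs_div, abs_of_pos hD]
      have hnum := hC x hx1
      calc |dd (m + 2) x - x * Real.log x ^ (m + 1) / (m + 1).factorial|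
            / (x * Real.log x ^ (m + 1))
          ≤ (C * x * (1 + Real.log x) ^ ((m:ℝ) + 1/2)) / (x * Real.log x ^ (m + 1)) := by
            gcongr
        _ = C * ((1 + Real.log x) ^ ((m:ℝ) + 1/2) / Real.log x ^ (m + 1)) := by
            field_simp
        _ ≤ C * ((2 * Real.log x) ^ ((m:ℝ) + 1/2) / Real.log x ^ (m + 1)) := by
            apply mul_le_mul_of_nonneg_left _ hC0
            apply div_le_div_of_nonneg_right ?_ (by positivity) |>.trans_eq rfl
            case _ => exact Real.rpow_le_rpow (by linarith) (by linarith) (by positivity)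

        _ = C * 2 ^ ((m:ℝ) + 1/2) * Real.log x ^ (-(1:ℝ)/2) := by
            rw [Real.mul_rpow (by norm_num) hlog0.le]
            rw [show (Real.log x : ℝ) ^ (m + 1) = Real.log x ^ (((m + 1 : ℕ)):ℝ) from
              (Real.rpow_natCast _ _).symm]
            rw [div_eq_mul_inv, ← Real.rpow_neg hlog0.le, mul_assoc,
              ← Real.rpow_add hlog0]
            push_cast
            ring_nf
      have h1 : Filter.Tendsto (fun x : ℝ => Real.log x ^ (-(1:ℝ)/2)) Filter.atTop (nhds 0) := by
        have := (tendsto_rpow_neg_atTop (by norm_num : (0:ℝ) < 1/2)).comp Real.tendsto_log_atTop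
        simpa [Function.comp_def, neg_div] using this
      simpa using (h1.const_mul (C * 2 ^ ((m:ℝ) + 1/2)))
    have := hsq.add_const (1 / ((m+1).factorial : ℝ))
    simp only [zero_add, sub_add_cancel] at this
    exact this
end

section
open Real Filter

lemma dd_tendsto_div (m q : ℕ) (hq : 1 ≤ q) :
    Tendsto (fun x => dd (m + 1) (x / q) / (x * Real.log x ^ m)) atTop
      (nhds (1 / ((q : ℝ) * m.factorial))) := by
  have hq0 : (0:ℝ) < q := by exact_mod_cast hq
  have h1 : Tendsto (fun x : ℝ => x / q) atTop atTop :=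
    Filter.tendsto_id.atTop_div_const hq0
  have h2 := (dd_tendsto m).comp h1
  have h3 : Tendsto (fun x : ℝ => 1 - Real.log q / Real.log x) atTop (nhds 1) := by
    have : Tendsto (fun x : ℝ => Real.log q / Real.log x) atTop (nhds 0) :=
      Filter.Tendsto.div_atTop tendsto_const_nhds Real.tendsto_log_atTop
    simpa using tendsto_const_nhds.sub this
  have h4 : Tendsto (fun x : ℝ => 1 / (q:ℝ) * (1 - Real.log q / Real.log x) ^ m) atTop
      (nhds (1 / (q:ℝ) * 1)) := by
    have := (h3.pow m)
    rw [one_pow] at this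
    exact tendsto_const_nhds.mul this
  have h5 := h2.mul h4
  rw [show (1 / (m.factorial : ℝ)) * (1 / (q:ℝ) * 1) = 1 / ((q:ℝ) * m.factorial) by
    field_simp] at h5
  apply h5.congr'
  filter_upwards [eventually_ge_atTop (3 * (q:ℝ)), eventually_ge_atTop (3:ℝ)] with x hx3q hx3
  have hx0 : (0:ℝ) < x := by linarith
  have hxq1 : (3:ℝ) ≤ x / q := by
    rw [le_div_iff₀ hq0]
    linarith
  have hxq0 : (0:ℝ) < x / q := by linarith
  have hlogq : (0:ℝ) < Real.log (x / q) := Real.log_pos (by linarith)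
  have hlogx : (0:ℝ) < Real.log x := Real.log_pos (by linarith)
  have hlq : Real.log (x / q) = Real.log x - Real.log q := Real.log_div hx0.ne' (by positivity)
  have hfrac : 1 - Real.log q / Real.log x = Real.log (x / q) / Real.log x := by
    rw [hlq]
    field_simp
  simp only [Function.comp]
  rw [hfrac, div_pow]
  have hlxqm : (0:ℝ) < Real.log (x / q) ^ m := by positivity
  have hlxm : (0:ℝ) < Real.log x ^ m := by positivity
  field_simp
end

set_option maxHeartbeats 2000000 in
theorem hyperbolic_wintner (k : ℕ) (hk : 1 ≤ k) (F : (Fin k → ℕ) → ℂ)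
    (habs : Summable fun v : Fin k → ℕ => ‖mconv k F v‖ / ∏ i, (v i : ℝ)) :
    Tendsto (fun x : ℝ =>
        (∑ n ∈ Finset.Icc 1 ⌊x⌋₊, ∑ v ∈ tuplesProd k n, F v) /
          ((x * Real.log x ^ (k - 1) : ℝ) : ℂ))
      atTop
      (nhds ((∑' v : Fin k → ℕ, mconv k F v / ∏ i, (v i : ℂ)) /
        (Nat.factorial (k - 1) : ℂ))) := by
  obtain ⟨m, rfl⟩ : ∃ m, k = m + 1 := ⟨k - 1, by omega⟩
  simp only [Nat.add_sub_cancel]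
  set f : ℝ → (Fin (m + 1) → ℕ) → ℂ := fun x d =>
    mconv (m + 1) F d * (Tc (m + 1) (⌊x⌋₊ / ∏ i, d i) : ℂ) /
      ((x * Real.log x ^ m : ℝ) : ℂ) with hfdef
  set g : (Fin (m + 1) → ℕ) → ℂ := fun d =>
    mconv (m + 1) F d / (∏ i, (d i : ℂ)) / ((m.factorial : ℕ) : ℂ) with hgdef
  obtain ⟨B, hB0, hB⟩ := dd_upper m
  set bound : (Fin (m + 1) → ℕ) → ℝ := fun d =>
    (2 ^ m * B) * (‖mconv (m + 1) F d‖ / ∏ i, ((d i : ℕ) : ℝ)) with hbdef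
  -- vanishing of f outside Ak
  have hvanish : ∀ x : ℝ, ∀ d ∉ Ak (m + 1) ⌊x⌋₊,
      mconv (m + 1) F d * (Tc (m + 1) (⌊x⌋₊ / ∏ i, d i) : ℂ) = 0 := by
    intro x d hd
    rw [mem_Ak] at hd
    push_neg at hd
    by_cases hz : ∀ i, 1 ≤ d i
    · have hgt : ⌊x⌋₊ < ∏ i, d i := by
        by_contra hle
        exact absurd (hd hz) (by omega)
      rw [Nat.div_eq_of_lt hgt, Tc_zero_right, Nat.cast_zero, mul_zero]
    · push_neg at hz
      obtain ⟨i, hi⟩ := hz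
      rw [mconv_eq_zero F (n := d) (i := i) (by omega), zero_mul]
  -- step 1 : the summatory function equals the tsum of f
  have hstep1 : ∀ x : ℝ,
      (∑ n ∈ Finset.Icc 1 ⌊x⌋₊, ∑ v ∈ tuplesProd (m + 1) n, F v) /
        ((x * Real.log x ^ m : ℝ) : ℂ) = ∑' d, f x d := by
    intro x
    rw [sum_S, hyperbola]
    rw [tsum_eq_sum (s := Ak (m + 1) ⌊x⌋₊) (f := f x) (by
      intro d hd
      rw [hfdef]
      simp only []
      rw [hvanish x d hd, zero_div])]
    rw [Finset.sum_div]
  -- pointwise limits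
  have hlim : ∀ d, Filter.Tendsto (fun x => f x d) Filter.atTop (nhds (g d)) := by
    intro d
    by_cases hz : ∀ i, 1 ≤ d i
    · set q : ℕ := ∏ i, d i with hqdef
      have hq1 : 1 ≤ q := Finset.one_le_prod' fun i _ => hz i
      have hq0R : (0:ℝ) < q := by exact_mod_cast hq1
      have hfr : ∀ x : ℝ, f x d = mconv (m + 1) F d *
          ((dd (m + 1) (x / q) / (x * Real.log x ^ m) : ℝ) : ℂ) := by
        intro x
        have hkey : ((dd (m + 1) (x / q) / (x * Real.log x ^ m) : ℝ) : ℂ)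
            = (Tc (m + 1) (⌊x⌋₊ / q) : ℂ) / ((x * Real.log x ^ m : ℝ) : ℂ) := by
          rw [Complex.ofReal_div]
          congr 1
          unfold dd
          rw [← Nat.floor_div_natCast x q]
          push_cast
          rfl
        rw [hfdef]
        simp only []
        rw [hkey, mul_div_assoc]
      have hreal := dd_tendsto_div m q hq1
      have hcplx : Filter.Tendsto
          (fun x => ((dd (m + 1) (x / q) / (x * Real.log x ^ m) : ℝ) : ℂ))
          Filter.atTop (nhds ((1 / ((q:ℝ) * m.factorial) : ℝ) : ℂ)) :=
        (Complex.continuous_ofReal.tendsto _).comp hreal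
      have := hcplx.const_mul (mconv (m + 1) F d)
      refine Filter.Tendsto.congr (fun x => (hfr x).symm) (by
        convert this using 2
        rw [hgdef]
        simp only []
        have : (∏ i, ((d i : ℕ) : ℂ)) = ((q:ℕ) : ℂ) := by
          rw [hqdef]
          push_cast
          rfl
        rw [this]
        push_cast
        rw [div_div]
        rw [mul_one_div])
    · push_neg at hz
      obtain ⟨i, hi⟩ := hz
      have hm0 : mconv (m + 1) F d = 0 := mconv_eq_zero F (n := d) (i := i) (by omega)
      have hf0 : ∀ x, f x d = 0 := by
        intro x
        rw [hfdef]
        simp only [hm0, zero_mul, zero_div]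
      have hg0 : g d = 0 := by
        rw [hgdef]
        simp only [hm0, zero_div]
      rw [hg0]
      exact Filter.Tendsto.congr (fun x => (hf0 x).symm) tendsto_const_nhds
  -- bound
  have hbound : ∀ᶠ x in Filter.atTop, ∀ d, ‖f x d‖ ≤ bound d := by
    filter_upwards [Filter.eventually_ge_atTop (3:ℝ)] with x hx3
    intro d
    have hx1 : (1:ℝ) ≤ x := by linarith
    have hx0 : (0:ℝ) < x := by linarith
    have hlog1 : 1 ≤ Real.log x := log_ge_one hx3
    have hlog0 : (0:ℝ) < Real.log x := by linarith
    have hD : (0:ℝ) < x * Real.log x ^ m := by positivity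
    have hnorm : ‖f x d‖ = ‖mconv (m + 1) F d‖ *
        (Tc (m + 1) (⌊x⌋₊ / ∏ i, d i) : ℝ) / (x * Real.log x ^ m) := by
      rw [hfdef]
      simp only []
      rw [norm_div, norm_mul]
      rw [Complex.norm_natCast, Complex.norm_real, Real.norm_eq_abs, abs_of_pos hD]
    by_cases hz : ∀ i, 1 ≤ d i
    · set q : ℕ := ∏ i, d i with hqdef
      have hq1 : 1 ≤ q := Finset.one_le_prod' fun i _ => hz i
      have hq0R : (0:ℝ) < q := by exact_mod_cast hq1
      have hTd : (Tc (m + 1) (⌊x⌋₊ / q) : ℝ) = dd (m + 1) (x / q) := by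
        unfold dd
        rw [show Tc (m + 1) (⌊x⌋₊ / q) = Tc (m + 1) ⌊x / (q:ℝ)⌋₊ by rw [Nat.floor_div_natCast]]
      have hprodR : (∏ i, ((d i : ℕ) : ℝ)) = (q:ℝ) := by
        rw [hqdef]; push_cast; rfl
      rw [hnorm, hTd]
      by_cases hxq : 1 ≤ x / q
      · have hdd := hB _ hxq
        have hlogxq : Real.log (x / q) ≤ Real.log x :=
          Real.log_le_log (by linarith) (div_le_self hx0.le (by exact_mod_cast hq1))
        have hlogxq0 : 0 ≤ Real.log (x / q) := Real.log_nonneg hxq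
        have hdd2 : dd (m + 1) (x / q) ≤ B * 2 ^ m * (x / q) * Real.log x ^ m := by
          calc dd (m + 1) (x / q) ≤ B * (x / q) * (1 + Real.log (x / q)) ^ m := hdd
            _ ≤ B * (x / q) * (2 * Real.log x) ^ m := by
                apply mul_le_mul_of_nonneg_left _ (by positivity)
                exact pow_le_pow_left₀ (by linarith) (by linarith) m
            _ = B * 2 ^ m * (x / q) * Real.log x ^ m := by
                rw [mul_pow]; ring
        calc ‖mconv (m + 1) F d‖ * dd (m + 1) (x / q) / (x * Real.log x ^ m)
            ≤ ‖mconv (m + 1) F d‖ * (B * 2 ^ m * (x / q) * Real.log x ^ m)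
                / (x * Real.log x ^ m) := by
              gcongr
          _ = bound d := by
              rw [hbdef]
              simp only []
              rw [hprodR]
              field_simp
      · rw [dd_of_lt_one (by linarith)]
        rw [hbdef]
        simp only []
        have : (0:ℝ) ≤ ‖mconv (m + 1) F d‖ / ∏ i, ((d i : ℕ) : ℝ) := by positivity
        rw [mul_zero, zero_div]
        positivity
    · push_neg at hz
      obtain ⟨i, hi⟩ := hz
      have hm0 : mconv (m + 1) F d = 0 := mconv_eq_zero F (n := d) (i := i) (by omega)
      rw [hnorm, hm0]
      simp only [norm_zero, zero_mul, zero_div]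
      rw [hbdef]
      positivity
  -- summability of the bound
  have hsum : Summable bound := by
    rw [hbdef]
    exact habs.mul_left _
  have hmain := tendsto_tsum_of_dominated_convergence hsum hlim hbound
  have htsum : (∑' d, g d) = (∑' v : Fin (m + 1) → ℕ, mconv (m + 1) F v / ∏ i, (v i : ℂ)) /
      ((m.factorial : ℕ) : ℂ) := by
    rw [hgdef]
    exact tsum_div_const
  rw [← htsum]
  exact Filter.Tendsto.congr (fun x => (hstep1 x).symm) hmain

end

end
end
end
end

section
/- Let k ≥ 2 and F(n₁,…,n_k) = f(gcd(n₁,…,n_k)) for an arithmetic function f. Then the convolute F̃(n) = ∑_{n₁⋯n_k = n} F(n₁,…,n_k) satisfies F̃(n) = ∑_{dδ = n} g(d) τ_k(δ), where g(d) = (μ*f)(m) if d = m^k is a perfect k-th power and g(d) = 0 otherwise. -/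
open Finset Filter

noncomputable section

/-- The Piltz divisor function `τ_k`. -/
def piltz (k n : ℕ) : ℕ := (tuplesProd k n).card

/-- Dirichlet convolution of the Möbius function with `f`. -/
def muConv (f : ℕ → ℂ) (d : ℕ) : ℂ :=
  ∑ p ∈ d.divisorsAntidiagonal, ((ArithmeticFunction.moebius p.1 : ℤ) : ℂ) * f p.2

lemma mem_tuplesProd {k n : ℕ} (hn : n ≠ 0) {v : Fin k → ℕ} :
    v ∈ tuplesProd k n ↔ ∏ i, v i = n := by
  simp only [tuplesProd, mem_filter, Fintype.mem_piFinset, Nat.mem_divisors]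
  exact ⟨fun h => h.2, fun h =>
    ⟨fun i => ⟨h ▸ Finset.dvd_prod_of_mem v (mem_univ i), hn⟩, h⟩⟩

lemma sum_muConv (f : ℕ → ℂ) (d : ℕ) (hd : d ≠ 0) :
    ∑ m ∈ d.divisors, muConv f m = f d := by
  classical
  set f' : ArithmeticFunction ℂ := ⟨fun n => if n = 0 then 0 else f n, by simp⟩ with hf'
  have hmu : ∀ m : ℕ, m ≠ 0 →
      muConv f m = (((ArithmeticFunction.moebius :
        ArithmeticFunction ℤ) : ArithmeticFunction ℂ) * f') m := by
    intro m hm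
    rw [ArithmeticFunction.mul_apply, muConv]
    refine Finset.sum_congr rfl fun p hp => ?_
    rw [Nat.mem_divisorsAntidiagonal] at hp
    have h2 : p.2 ≠ 0 := by
      intro h0
      exact hp.2 (by rw [← hp.1, h0, mul_zero])
    simp [hf', h2]
  have key : ((ArithmeticFunction.zeta : ArithmeticFunction ℕ) : ArithmeticFunction ℂ) *
      (((ArithmeticFunction.moebius : ArithmeticFunction ℤ) : ArithmeticFunction ℂ) * f') = f' := by
    rw [← mul_assoc, ArithmeticFunction.coe_zeta_mul_coe_moebius, one_mul]
  calc ∑ m ∈ d.divisors, muConv f m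
      = ∑ m ∈ d.divisors, (((ArithmeticFunction.moebius :
          ArithmeticFunction ℤ) : ArithmeticFunction ℂ) * f') m := by
        refine Finset.sum_congr rfl fun m hm => hmu m ?_
        exact (Nat.pos_of_mem_divisors hm).ne'
    _ = f' d := by rw [← ArithmeticFunction.coe_zeta_mul_apply, key]
    _ = f d := by simp [hf', hd]

lemma card_filter_dvd (k m n : ℕ) (hn : n ≠ 0) (hm : m ≠ 0) (h : m ^ k ∣ n) :
    ((tuplesProd k n).filter fun v => ∀ i, m ∣ v i).card = piltz k (n / m ^ k) := by
  classical
  have hmk : m ^ k ≠ 0 := fun h0 => hn (Nat.eq_zero_of_zero_dvd (h0 ▸ h))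
  have hq : n / m ^ k ≠ 0 := by
    intro h0
    exact hn (by rw [← Nat.div_mul_cancel h, h0, zero_mul])
  rw [piltz]
  refine Finset.card_bij' (fun v _ => fun i => v i / m) (fun w _ => fun i => m * w i)
    ?_ ?_ ?_ ?_
  · intro v hv
    rw [Finset.mem_filter, mem_tuplesProd hn] at hv
    obtain ⟨hvp, hvd⟩ := hv
    rw [mem_tuplesProd hq]
    have key : (∏ i, v i / m) * m ^ k = n := by
      have h2 : ∏ i, (v i / m) * m = ∏ i, v i :=
        Finset.prod_congr rfl fun i _ => Nat.div_mul_cancel (hvd i)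
      rw [Finset.prod_mul_distrib, Finset.prod_const, Finset.card_univ,
        Fintype.card_fin] at h2
      rw [h2, hvp]
    show ∏ i, v i / m = n / m ^ k
    rw [← key, Nat.mul_div_cancel _ (Nat.pos_of_ne_zero hmk)]
  · intro w hw
    rw [mem_tuplesProd hq] at hw
    rw [Finset.mem_filter, mem_tuplesProd hn]
    constructor
    · rw [Finset.prod_mul_distrib, Finset.prod_const, Finset.card_univ, Fintype.card_fin, hw,
        Nat.mul_div_cancel' h]
    · exact fun i => Dvd.intro _ rfl
  · intro v hv
    rw [Finset.mem_filter] at hv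
    funext i
    exact Nat.mul_div_cancel' (hv.2 i)
  · intro w hw
    funext i
    exact Nat.mul_div_cancel_left _ (Nat.pos_of_ne_zero hm)

theorem gcd_convolute_as_g_conv_piltz (k : ℕ) (hk : 2 ≤ k) (f g : ℕ → ℂ)
    (hg1 : ∀ m : ℕ, g (m ^ k) = muConv f m)
    (hg2 : ∀ d : ℕ, (¬ ∃ m : ℕ, m ^ k = d) → g d = 0)
    (n : ℕ) (hn : 0 < n) :
    ∑ v ∈ tuplesProd k n, f (Finset.univ.gcd v) =
      ∑ p ∈ n.divisorsAntidiagonal, g p.1 * (piltz k p.2 : ℂ) := by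
  classical
  have hn' : n ≠ 0 := hn.ne'
  have hk0 : k ≠ 0 := by omega
  have hkpos : (0 : ℕ) < k := by omega
  -- basic facts about tuples
  have hgcd_dvd : ∀ v ∈ tuplesProd k n, Finset.univ.gcd v ∣ n := by
    intro v hv
    rw [mem_tuplesProd hn'] at hv
    exact hv ▸ (Finset.gcd_dvd (mem_univ ⟨0, hkpos⟩)).trans
      (Finset.dvd_prod_of_mem v (mem_univ (⟨0, hkpos⟩ : Fin k)))
  have hgcd_ne : ∀ v ∈ tuplesProd k n, Finset.univ.gcd v ≠ 0 := by
    intro v hv h0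
    exact hn' (Nat.eq_zero_of_zero_dvd (h0 ▸ hgcd_dvd v hv))
  have hdvd_gcd : ∀ (m : ℕ) (v : Fin k → ℕ), m ∣ Finset.univ.gcd v ↔ ∀ i, m ∣ v i := by
    intro m v
    exact ⟨fun h i => h.trans (Finset.gcd_dvd (mem_univ i)),
      fun h => Finset.dvd_gcd fun i _ => h i⟩
  -- LHS
  have step1 : ∑ v ∈ tuplesProd k n, f (Finset.univ.gcd v)
      = ∑ v ∈ tuplesProd k n, ∑ m ∈ n.divisors,
          if m ∣ Finset.univ.gcd v then muConv f m else 0 := by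
    refine Finset.sum_congr rfl fun v hv => ?_
    rw [← sum_muConv f _ (hgcd_ne v hv)]
    rw [← Finset.sum_filter]
    congr 1
    ext a
    simp only [Finset.mem_filter, Nat.mem_divisors]
    constructor
    · exact fun ⟨h1, _⟩ => ⟨⟨h1.trans (hgcd_dvd v hv), hn'⟩, h1⟩
    · exact fun ⟨_, h2⟩ => ⟨h2, hgcd_ne v hv⟩
  have step2 : ∑ v ∈ tuplesProd k n, f (Finset.univ.gcd v)
      = ∑ m ∈ n.divisors, muConv f m *
          (((tuplesProd k n).filter fun v => ∀ i, m ∣ v i).card : ℂ) := by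
    rw [step1, Finset.sum_comm]
    refine Finset.sum_congr rfl fun m hm => ?_
    rw [← Finset.sum_filter]
    have : ((tuplesProd k n).filter fun v => m ∣ Finset.univ.gcd v)
        = ((tuplesProd k n).filter fun v => ∀ i, m ∣ v i) := by
      refine Finset.filter_congr fun v _ => ?_
      simp [hdvd_gcd m v]
    rw [this, Finset.sum_const, nsmul_eq_mul, mul_comm]
  -- card evaluation
  have step3 : ∑ v ∈ tuplesProd k n, f (Finset.univ.gcd v)
      = ∑ m ∈ n.divisors.filter (fun m => m ^ k ∣ n),
          muConv f m * (piltz k (n / m ^ k) : ℂ) := by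
    rw [step2, ← Finset.sum_filter_add_sum_filter_not _ (fun m => m ^ k ∣ n)]
    have hz : ∑ m ∈ n.divisors.filter (fun m => ¬ m ^ k ∣ n),
        muConv f m * (((tuplesProd k n).filter fun v => ∀ i, m ∣ v i).card : ℂ) = 0 := by
      refine Finset.sum_eq_zero fun m hm => ?_
      rw [Finset.mem_filter] at hm
      have : ((tuplesProd k n).filter fun v => ∀ i, m ∣ v i) = ∅ := by
        refine Finset.filter_eq_empty_iff.mpr fun v hv hmd => ?_
        rw [mem_tuplesProd hn'] at hv
        refine hm.2 ?_
        calc m ^ k = ∏ _i : Fin k, m := by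
              rw [Finset.prod_const, Finset.card_univ, Fintype.card_fin]
          _ ∣ ∏ i, v i := Finset.prod_dvd_prod_of_dvd _ _ fun i _ => hmd i
          _ = n := hv
      simp [this]
    rw [hz, add_zero]
    refine Finset.sum_congr rfl fun m hm => ?_
    rw [Finset.mem_filter] at hm
    rw [card_filter_dvd k m n hn' (Nat.pos_of_mem_divisors hm.1).ne' hm.2]
  -- RHS
  have rhs1 : ∑ p ∈ n.divisorsAntidiagonal, g p.1 * (piltz k p.2 : ℂ)
      = ∑ d ∈ n.divisors, g d * (piltz k (n / d) : ℂ) :=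
    Nat.sum_divisorsAntidiagonal (fun d e => g d * (piltz k e : ℂ))
  set s : Finset ℕ := n.divisors.filter (fun m => m ^ k ∣ n) with hs
  set t : Finset ℕ := s.image (fun m => m ^ k) with ht
  have hts : t ⊆ n.divisors := by
    intro d hd
    rw [ht, Finset.mem_image] at hd
    obtain ⟨m, hm, rfl⟩ := hd
    rw [hs, Finset.mem_filter] at hm
    exact Nat.mem_divisors.mpr ⟨hm.2, hn'⟩
  have rhs2 : ∑ d ∈ n.divisors, g d * (piltz k (n / d) : ℂ)
      = ∑ d ∈ t, g d * (piltz k (n / d) : ℂ) := by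
    refine (Finset.sum_subset hts fun d hd hdt => ?_).symm
    have : ¬ ∃ m : ℕ, m ^ k = d := by
      rintro ⟨m, rfl⟩
      refine hdt ?_
      rw [ht, Finset.mem_image]
      refine ⟨m, ?_, rfl⟩
      rw [hs, Finset.mem_filter]
      have hdvd : m ^ k ∣ n := (Nat.mem_divisors.mp hd).1
      exact ⟨Nat.mem_divisors.mpr ⟨(dvd_pow_self m hk0).trans hdvd, hn'⟩, hdvd⟩
    rw [hg2 d this, zero_mul]
  have rhs3 : ∑ d ∈ t, g d * (piltz k (n / d) : ℂ)
      = ∑ m ∈ s, muConv f m * (piltz k (n / m ^ k) : ℂ) := by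
    rw [ht, Finset.sum_image (fun x _ y _ h => Nat.pow_left_injective (by omega) h)]
    exact Finset.sum_congr rfl fun m _ => by rw [hg1]
  rw [step3, rhs1, rhs2, rhs3]
end
end
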